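/- The Newell-Littlewood number N_{μ,ν,λ} vanishes if |ν ∧ λ| + |μ ∧ ν| < |ν|, where μ ∧ ν denotes the partition whose i-th part is min(μ_i, ν_i). -/

import Mathlib

open YoungDiagram

/-- An LR (Littlewood–Richardson) filling witnessing the Littlewood–Richardson
coefficient `c^lam_{μ,ν}`: a ballot (lattice-word) semistandard filling of the skew
shape `lam/μ` with content `ν`.  The entry in row `i`, column `j` is `T i j`;
entries are `≥ 1` on the cells of `lam/μ` and `0` elsewhere. -/
structure LRFilling (μ ν lam : YoungDiagram) : Type where
  sub : μ ≤ lam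
  T : ℕ → ℕ → ℕ
  supp : ∀ i j, T i j ≠ 0 ↔ ((i, j) ∈ lam ∧ (i, j) ∉ μ)
  rows_weak : ∀ i j₁ j₂, j₁ ≤ j₂ → T i j₁ ≠ 0 → T i j₂ ≠ 0 → T i j₁ ≤ T i j₂
  cols_strict : ∀ i₁ i₂ j, i₁ < i₂ → T i₁ j ≠ 0 → T i₂ j ≠ 0 → T i₁ j < T i₂ j
  content : ∀ k : ℕ, Nat.card {p : ℕ × ℕ // T p.1 p.2 = k + 1} = ν.rowLen k
  ballot : ∀ i j k : ℕ,
    Nat.card {p : ℕ × ℕ // (p.1 < i ∨ (p.1 = i ∧ j ≤ p.2)) ∧ T p.1 p.2 = k + 2} ≤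
      Nat.card {p : ℕ × ℕ // (p.1 < i ∨ (p.1 = i ∧ j ≤ p.2)) ∧ T p.1 p.2 = k + 1}

/-- The Littlewood–Richardson coefficient `c^lam_{μ,ν}`. -/
noncomputable def lrCoeff (μ ν lam : YoungDiagram) : ℕ := Nat.card (LRFilling μ ν lam)

/-- The Newell–Littlewood number
`N_{μ,ν,lam} = Σ_{α,β,γ} c^μ_{α,β} c^ν_{α,γ} c^lam_{β,γ}`,
realized as the cardinality of the set of triples of LR fillings over all `α,β,γ`. -/
noncomputable def NL (μ ν lam : YoungDiagram) : ℕ :=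
  Nat.card (Σ α β γ : YoungDiagram,
    (LRFilling α β μ × LRFilling α γ ν × LRFilling β γ lam))

/-- Any cell of a Young diagram has its row index below the cardinality. -/
lemma fst_lt_card {μ : YoungDiagram} {i j : ℕ} (h : (i, j) ∈ μ) : i < μ.card := by
  have hsub : ∀ k ∈ Finset.range (i + 1), (k, 0) ∈ μ.cells := by
    intro k hk
    rw [Finset.mem_range] at hk
    rw [YoungDiagram.mem_cells]
    exact μ.up_left_mem (by omega) (Nat.zero_le _) h
  have hinj : Set.InjOn (fun k => ((k, 0) : ℕ × ℕ)) (Finset.range (i + 1)) := by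
    intro a _ b _ hab
    simpa using hab
  have := Finset.card_le_card_of_injOn _ hsub hinj
  simpa [YoungDiagram.card] using this

section LRlemmas

variable {μ ν lam : YoungDiagram}

/-- In an LR filling, every entry in row `i` is at most `i + 1`. -/
lemma LRFilling.entry_le (F : LRFilling μ ν lam) :
    ∀ i j, F.T i j ≠ 0 → F.T i j ≤ i + 1 := by
  intro i
  induction i using Nat.strong_induction_on with
  | _ i ih =>
    intro j hne
    by_contra hgt
    push_neg at hgt
    obtain ⟨k, hk⟩ : ∃ k, F.T i j = k + 2 := ⟨F.T i j - 2, by omega⟩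
    have hki : i ≤ k := by omega
    -- the region: rows < i, or row i columns ≥ j
    have hfin : ∀ m : ℕ,
        Finite {p : ℕ × ℕ // (p.1 < i ∨ (p.1 = i ∧ j ≤ p.2)) ∧ F.T p.1 p.2 = m + 1} := by
      intro m
      have : {p : ℕ × ℕ | (p.1 < i ∨ (p.1 = i ∧ j ≤ p.2)) ∧ F.T p.1 p.2 = m + 1} ⊆
          ↑lam.cells := by
        intro p hp
        have : F.T p.1 p.2 ≠ 0 := by rw [hp.2]; omega
        have := ((F.supp p.1 p.2).mp this).1
        simpa using this
      exact (Set.Finite.subset lam.cells.finite_toSet this).to_subtype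
    have h2 : Nat.card {p : ℕ × ℕ // (p.1 < i ∨ (p.1 = i ∧ j ≤ p.2)) ∧ F.T p.1 p.2 = k + 2} ≠
        0 := by
      have : Nonempty {p : ℕ × ℕ // (p.1 < i ∨ (p.1 = i ∧ j ≤ p.2)) ∧ F.T p.1 p.2 = k + 2} :=
        ⟨⟨(i, j), Or.inr ⟨rfl, le_refl j⟩, hk⟩⟩
      exact Nat.card_ne_zero.mpr ⟨this, hfin (k + 1)⟩
    have h1 : Nat.card {p : ℕ × ℕ // (p.1 < i ∨ (p.1 = i ∧ j ≤ p.2)) ∧ F.T p.1 p.2 = k + 1} ≠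
        0 := by
      have := F.ballot i j k
      omega
    obtain ⟨⟨p, hreg, hval⟩⟩ := (Nat.card_ne_zero.mp h1).1
    have hpne : F.T p.1 p.2 ≠ 0 := by rw [hval]; omega
    rcases hreg with hlt | ⟨heq, hle⟩
    · have := ih p.1 hlt p.2 hpne
      omega
    · rw [heq] at hval
      have := F.rows_weak i j p.2 hle (by rw [hk]; omega) (by rw [hval]; omega)
      rw [hk, hval] at this
      omega

/-- The content of an LR filling is contained in the outer shape. -/
lemma LRFilling.content_le (F : LRFilling μ ν lam) : ν ≤ lam := by
  have hrow : ∀ k, ν.rowLen k ≤ lam.rowLen k := by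
    intro k
    rw [← F.content k]
    have hmap : ∀ p : {p : ℕ × ℕ // F.T p.1 p.2 = k + 1}, (p : ℕ × ℕ).2 < lam.rowLen k := by
      rintro ⟨p, hp⟩
      have hne : F.T p.1 p.2 ≠ 0 := by rw [hp]; omega
      have hmem := ((F.supp p.1 p.2).mp hne).1
      have hki : k ≤ p.1 := by have := F.entry_le p.1 p.2 hne; omega
      have h1 : p.2 < lam.rowLen p.1 := by
        rw [← YoungDiagram.mem_iff_lt_rowLen]; exact hmem
      exact lt_of_lt_of_le h1 (lam.rowLen_anti k p.1 hki)
    have hinj : Function.Injective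
        (fun p : {p : ℕ × ℕ // F.T p.1 p.2 = k + 1} => (⟨(p : ℕ × ℕ).2, hmap p⟩ :
          Fin (lam.rowLen k))) := by
      rintro ⟨p, hp⟩ ⟨q, hq⟩ hpq
      simp only [Fin.mk.injEq] at hpq
      have hne : p.1 = q.1 := by
        by_contra hne
        rcases Nat.lt_or_ge p.1 q.1 with hlt | hge
        · have := F.cols_strict p.1 q.1 p.2 hlt (by rw [hp]; omega)
            (by rw [hpq, hq]; omega)
          rw [hp, hpq, hq] at this; omega
        · have hlt : q.1 < p.1 := by omega
          have := F.cols_strict q.1 p.1 q.2 hlt (by rw [hq]; omega)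
            (by rw [← hpq, hp]; omega)
          rw [hq, ← hpq, hp] at this; omega
      ext
      · exact hne
      · exact hpq
    simpa using Nat.card_le_card_of_injective _ hinj
  intro p hp
  obtain ⟨i, j⟩ := p
  rw [YoungDiagram.mem_iff_lt_rowLen] at hp ⊢
  exact lt_of_lt_of_le hp (hrow i)

/-- Cardinality count: `|μ| + |ν| = |lam|` for an LR filling of `lam/μ` with content `ν`. -/
lemma LRFilling.card_eq (F : LRFilling μ ν lam) : μ.card + ν.card = lam.card := by
  classical
  set D : Finset (ℕ × ℕ) := lam.cells \ μ.cells with hD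
  have hmemD : ∀ p : ℕ × ℕ, p ∈ D ↔ F.T p.1 p.2 ≠ 0 := by
    intro p
    rw [hD, Finset.mem_sdiff, F.supp p.1 p.2]
    simp [YoungDiagram.mem_cells]
  set K := lam.card with hK
  -- each fiber as a finset
  have hfiber : ∀ k, (D.filter (fun p => F.T p.1 p.2 = k + 1)).card = ν.rowLen k := by
    intro k
    rw [← F.content k]
    have hset : {p : ℕ × ℕ | F.T p.1 p.2 = k + 1} =
        ↑(D.filter (fun p => F.T p.1 p.2 = k + 1)) := by
      ext p
      simp only [Set.mem_setOf_eq, Finset.coe_filter, Set.mem_setOf_eq, Finset.mem_coe]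
      constructor
      · intro h
        exact ⟨(hmemD p).mpr (by rw [h]; omega), h⟩
      · exact fun h => h.2
    have hc : Nat.card {p : ℕ × ℕ // F.T p.1 p.2 = k + 1} =
        ({p : ℕ × ℕ | F.T p.1 p.2 = k + 1}).ncard := Nat.card_coe_set_eq _
    rw [hc, hset, Set.ncard_coe_finset]
  -- D.card = Σ_{k < K} fibers
  have hDcard : D.card = ∑ k ∈ Finset.range K, ν.rowLen k := by
    rw [Finset.card_eq_sum_card_fiberwise (f := fun p => F.T p.1 p.2 - 1)
      (t := Finset.range K)]
    · apply Finset.sum_congr rfl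
      intro k _
      rw [← hfiber k]
      congr 1
      apply Finset.filter_congr
      intro p hp
      have := (hmemD p).mp hp
      omega
    · intro p hp
      have hne := (hmemD p).mp hp
      have h1 := F.entry_le p.1 p.2 hne
      have h2 : (p.1, p.2) ∈ lam := by
        have := ((F.supp p.1 p.2).mp hne).1
        simpa using this
      have := fst_lt_card h2
      simp only [Finset.mem_coe, Finset.mem_range]
      omega
  -- ν.card = Σ_{k < K} ν.rowLen k
  have hνcard : ν.card = ∑ k ∈ Finset.range K, ν.rowLen k := by
    rw [YoungDiagram.card, Finset.card_eq_sum_card_fiberwise (f := fun p => p.1)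
      (t := Finset.range K)]
    · apply Finset.sum_congr rfl
      intro k _
      rw [YoungDiagram.rowLen_eq_card, YoungDiagram.row]
    · intro p hp
      rw [Finset.mem_coe, YoungDiagram.mem_cells] at hp
      have hrl : 0 < ν.rowLen p.1 := by
        have : (p.1, p.2) ∈ ν := hp
        rw [YoungDiagram.mem_iff_lt_rowLen] at this
        omega
      have hne : Nat.card {q : ℕ × ℕ // F.T q.1 q.2 = p.1 + 1} ≠ 0 := by
        rw [F.content p.1]; omega
      obtain ⟨⟨q, hq⟩⟩ := (Nat.card_ne_zero.mp hne).1
      have hqne : F.T q.1 q.2 ≠ 0 := by rw [hq]; omega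
      have hqmem : (q.1, q.2) ∈ lam := ((F.supp q.1 q.2).mp hqne).1
      have h1 := F.entry_le q.1 q.2 hqne
      have := fst_lt_card hqmem
      simp only [Finset.mem_coe, Finset.mem_range]
      omega
  have hsub : μ.cells ⊆ lam.cells := YoungDiagram.cells_subset_iff.mpr F.sub
  have hsd := Finset.card_sdiff_add_card_eq_card hsub
  rw [← hD] at hsd
  have e1 : μ.card = μ.cells.card := rfl
  have e2 : ν.card = ν.cells.card := rfl
  have e3 : lam.card = lam.cells.card := rfl
  omega

end LRlemmas

/-- `N_{μ,ν,lam} = 0` if `|ν ⊓ lam| + |μ ⊓ ν| < |ν|`, where `⊓` is the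
meet of Young diagrams (whose `i`-th row has length `min (μ_i, ν_i)`). -/
theorem NL_eq_zero_of_meet (μ ν lam : YoungDiagram)
    (h : (ν ⊓ lam).card + (μ ⊓ ν).card < ν.card) : NL μ ν lam = 0 := by
  have hempty : IsEmpty (Σ α β γ : YoungDiagram,
      (LRFilling α β μ × LRFilling α γ ν × LRFilling β γ lam)) := by
    constructor
    rintro ⟨α, β, γ, F1, F2, F3⟩
    have hα : α ≤ μ ⊓ ν := le_inf F1.sub F2.sub
    have hγ : γ ≤ ν ⊓ lam := le_inf F2.content_le F3.content_le
    have hcard : α.card + γ.card = ν.card := F2.card_eq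
    have c1 : α.card ≤ (μ ⊓ ν).card :=
      Finset.card_le_card (YoungDiagram.cells_subset_iff.mpr hα)
    have c2 : γ.card ≤ (ν ⊓ lam).card :=
      Finset.card_le_card (YoungDiagram.cells_subset_iff.mpr hγ)
    omega
  rw [NL]
  exact Nat.card_of_isEmpty
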